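/- arXiv:2306.16257 — 4 statements merged into one kernel-verified Lean document; each statement's English description precedes it below -/
import Mathlib

section
/- Let x be a real number, set s = 1/2 + i·x, and let φ ∈ (-π, π). Then the rotated-ray integral converges and Γ(s)·Γ(1-s) = e^{-i·φ·s} · ∫₀^∞ t^{s-1}/(1 + t·e^{-i·φ}) dt, where t^{s-1} denotes the complex power exp((s-1)·log t) of the positive real number t. -/
open MeasureTheory Set Real Filter

lemma expIphi (φ : ℝ) : Complex.exp (-Complex.I*φ) = Complex.ofReal (Real.cos φ) - Complex.ofReal (Real.sin φ) * Complex.I := by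
  have : -Complex.I*(φ:ℂ) = ((-φ:ℝ):ℂ) * Complex.I := by push_cast; ring
  rw [this, Complex.exp_mul_I, ← Complex.ofReal_cos, ← Complex.ofReal_sin,
    Real.cos_neg, Real.sin_neg]
  push_cast; ring

lemma denom_lb {a φ t : ℝ} (ha : a < π) (hφ : |φ| ≤ a) (ht : 0 ≤ t) :
    Real.sin a / 4 * (1+t) ≤ ‖1 + (t:ℂ) * Complex.exp (-Complex.I*φ)‖ := by
  have ha0 : 0 ≤ a := le_trans (abs_nonneg φ) hφ
  have hsa0 : 0 ≤ Real.sin a := Real.sin_nonneg_of_nonneg_of_le_pi ha0 ha.le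
  have hsa1 : Real.sin a ≤ 1 := Real.sin_le_one a
  have hkey : (1 + (t:ℂ) * Complex.exp (-Complex.I*φ)) =
      Complex.ofReal (1 + t * Real.cos φ) + Complex.ofReal (-(t * Real.sin φ)) * Complex.I := by
    rw [expIphi]; push_cast; ring
  rw [hkey, Complex.norm_add_mul_I]
  have hc1 : Real.cos φ ≤ 1 := Real.cos_le_one φ
  have hc2 : -1 ≤ Real.cos φ := Real.neg_one_le_cos φ
  have hcs : Real.sin φ ^2 + Real.cos φ ^2 = 1 := Real.sin_sq_add_cos_sq φ
  have hsin : Real.cos φ < 0 → Real.sin a ≤ |Real.sin φ| := by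
    intro hc
    have habs : |Real.sin φ| = Real.sin |φ| := by
      rcases abs_cases φ with ⟨h1, h2⟩ | ⟨h1, h2⟩
      · rw [h1, abs_of_nonneg (Real.sin_nonneg_of_nonneg_of_le_pi h2 (by linarith))]
      · rw [h1, Real.sin_neg, abs_of_nonpos]
        have : 0 ≤ Real.sin (-φ) := Real.sin_nonneg_of_nonneg_of_le_pi (by linarith) (by linarith)
        rw [Real.sin_neg] at this; linarith
    have h2 : π/2 < |φ| := by
      by_contra h
      push_neg at h
      exact absurd (Real.cos_nonneg_of_mem_Icc ⟨by linarith [abs_nonneg φ, Real.pi_pos], h⟩ :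
        0 ≤ Real.cos |φ|) (by rw [Real.cos_abs]; linarith)
    rw [habs, ← Real.sin_pi_sub a, ← Real.sin_pi_sub |φ|]
    exact Real.sin_le_sin_of_le_of_le_pi_div_two (by linarith) (by linarith) (by linarith)
  apply Real.le_sqrt_of_sq_le
  set A := Real.sin a
  set c := Real.cos φ
  set s := Real.sin φ
  rcases lt_or_ge c 0 with hc | hc
  · have h1 := hsin hc
    have hA2 : A^2 ≤ s^2 := by
      have := abs_nonneg s
      nlinarith [sq_abs s]
    have key : (1+t*c)^2 + (-(t*s))^2 = (t+c)^2 + s^2 := by linear_combination (t^2-1) * hcs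
    rw [show (A/4*(1+t))^2 = (A/4*(1+t))^2 by rfl, key]
    rcases le_or_gt t 2 with h3 | h3
    · nlinarith [sq_nonneg (t+c), sq_nonneg A, mul_le_mul_of_nonneg_left
        (by nlinarith : (1+t)^2 ≤ 9) (sq_nonneg A)]
    · nlinarith [sq_nonneg s, mul_le_mul_of_nonneg_left (by nlinarith : ((1+t)/4)^2 ≤ (t-1)^2)
        (sq_nonneg A), sq_nonneg (t+c), (by nlinarith : (t-1)^2 ≤ (t+c)^2)]
  · have key : (1+t*c)^2 + (-(t*s))^2 = 1 + 2*t*c + t^2 := by linear_combination t^2 * hcs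
    rw [key]
    nlinarith [sq_nonneg (1-t), mul_nonneg ht hc, mul_le_mul_of_nonneg_left
      (by nlinarith : A^2 ≤ 1) (sq_nonneg (1+t)), sq_nonneg (1+t)]

lemma dom_integrable : IntegrableOn (fun t : ℝ => t^(-(1/2):ℝ)/(1+t)) (Ioi 0) := by
  have hmeas : ∀ S : Set ℝ, S ⊆ Ioi 0 → MeasurableSet S →
      AEStronglyMeasurable (fun t : ℝ => t^(-(1/2):ℝ)/(1+t)) (volume.restrict S) := by
    intro S hS hSm
    apply ContinuousOn.aestronglyMeasurable _ hSm
    intro t htS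
    have ht : 0 < t := hS htS
    exact ((Real.continuousAt_rpow_const t _ (Or.inl ht.ne')).continuousWithinAt.div
      (continuousWithinAt_const.add continuousWithinAt_id) (by positivity))
  have h1 : IntegrableOn (fun t : ℝ => t^(-(1/2):ℝ)/(1+t)) (Ioc 0 1) := by
    have hint : IntegrableOn (fun t : ℝ => t^(-(1/2):ℝ)) (Ioc 0 1) := by
      have h := (intervalIntegral.intervalIntegrable_rpow'
        (by norm_num : (-1:ℝ) < -(1/2)) : IntervalIntegrable _ volume 0 1)
      rwa [intervalIntegrable_iff_integrableOn_Ioc_of_le (by norm_num)] at h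
    apply hint.mono' (hmeas _ Ioc_subset_Ioi_self measurableSet_Ioc)
    filter_upwards [ae_restrict_mem measurableSet_Ioc] with t ht
    have ht0 : (0:ℝ) < t := ht.1
    rw [Real.norm_eq_abs, abs_of_nonneg (div_nonneg (Real.rpow_nonneg ht0.le _) (by linarith))]
    calc t^(-(1/2):ℝ)/(1+t) ≤ t^(-(1/2):ℝ)/1 :=
          div_le_div_of_nonneg_left (Real.rpow_nonneg ht0.le _) one_pos (by linarith)
      _ = t^(-(1/2):ℝ) := div_one _
  have h2 : IntegrableOn (fun t : ℝ => t^(-(1/2):ℝ)/(1+t)) (Ioi 1) := by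
    have hint : IntegrableOn (fun t : ℝ => t^(-(3/2):ℝ)) (Ioi 1) :=
      integrableOn_Ioi_rpow_of_lt (by norm_num) one_pos
    apply hint.mono' (hmeas _ (fun t (ht : (1:ℝ) < t) => (lt_trans one_pos ht : (0:ℝ) < t)) measurableSet_Ioi)
    filter_upwards [ae_restrict_mem measurableSet_Ioi] with t ht
    have ht1 : (1:ℝ) < t := ht
    have ht0 : (0:ℝ) < t := lt_trans one_pos ht1
    rw [Real.norm_eq_abs, abs_of_nonneg (div_nonneg (Real.rpow_nonneg ht0.le _) (by linarith))]
    have key : t^(-(3/2):ℝ) = t^(-(1/2):ℝ)/t := by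
      rw [show t^(-(1/2):ℝ)/t = t^(-(1/2):ℝ) * t^(-1:ℝ) by rw [Real.rpow_neg_one]; ring,
        ← Real.rpow_add ht0]
      norm_num
    rw [key]
    exact div_le_div_of_nonneg_left (Real.rpow_nonneg ht0.le _) ht0 (by linarith)
  have h := h1.union h2
  rwa [Ioc_union_Ioi_eq_Ioi (by norm_num : (0:ℝ) ≤ 1)] at h

lemma norm_exp_phi (x φ : ℝ) (s : ℂ) (hs : s = 1/2 + Complex.I * x) :
    ‖Complex.exp (-Complex.I*φ*s)‖ = Real.exp (φ*x) := by
  rw [Complex.norm_exp, hs]; congr 1; simp [Complex.mul_re, Complex.mul_im]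

lemma norm_cpow_s (x t : ℝ) (s : ℂ) (hs : s = 1/2 + Complex.I * x) (ht : 0 < t) :
    ‖(t:ℂ)^(s-1)‖ = t^(-(1/2):ℝ) := by
  rw [Complex.norm_cpow_eq_rpow_re_of_pos ht]
  congr 1; rw [hs]; simp; norm_num

lemma norm_D_le (x a φ : ℝ) (s : ℂ) (hs : s = 1/2 + Complex.I * x)
    (hsa : 0 < Real.sin a) (hφ : |φ| ≤ a) {t : ℝ} (ht : 0 < t)
    (lb : Real.sin a / 4 * (1+t) ≤ ‖1 + (t:ℂ) * Complex.exp (-Complex.I*φ)‖) :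
    ‖Complex.exp (-Complex.I*φ*s) * ((t:ℂ)^(s-1) *
        (s * (1 + (t:ℂ)*Complex.exp (-Complex.I*φ)) - (t:ℂ)*Complex.exp (-Complex.I*φ))) /
      (1 + (t:ℂ)*Complex.exp (-Complex.I*φ))^2‖
      ≤ (Real.exp (a*|x|) * ((‖s‖ + 4/Real.sin a) * (4/Real.sin a)))
        * (t^(-(1/2):ℝ)/(1+t)) := by
  set Dn := ‖1 + (t:ℂ) * Complex.exp (-Complex.I*φ)‖ with hDn
  set k := 4/Real.sin a with hk
  have hkpos : 0 < k := by positivity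
  have hupos : (0:ℝ) < 1 + t := by linarith
  have hmpos : (0:ℝ) < Real.sin a / 4 * (1+t) := by positivity
  have hDnpos : 0 < Dn := lt_of_lt_of_le hmpos lb
  have hm : 1 + t ≤ k * Dn := by
    rw [hk]
    rw [div_mul_eq_mul_div, le_div_iff₀ hsa]
    nlinarith
  have habsE : ‖Complex.exp (-Complex.I*φ)‖ = 1 := by
    rw [Complex.norm_exp]
    norm_num
  have hX : ‖s * (1 + (t:ℂ)*Complex.exp (-Complex.I*φ)) -
      (t:ℂ)*Complex.exp (-Complex.I*φ)‖ ≤ ‖s‖ * Dn + t := by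
    calc ‖s * (1 + (t:ℂ)*Complex.exp (-Complex.I*φ)) -
          (t:ℂ)*Complex.exp (-Complex.I*φ)‖
        ≤ ‖s * (1 + (t:ℂ)*Complex.exp (-Complex.I*φ))‖
          + ‖(t:ℂ)*Complex.exp (-Complex.I*φ)‖ := norm_sub_le _ _
      _ = ‖s‖ * Dn + t := by
          rw [norm_mul, norm_mul, habsE, Complex.norm_real, Real.norm_eq_abs, abs_of_pos ht, mul_one]
  have hexp : Real.exp (φ*x) ≤ Real.exp (a*|x|) := by
    apply Real.exp_le_exp.2
    calc φ*x ≤ |φ*x| := le_abs_self _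
      _ = |φ| * |x| := abs_mul _ _
      _ ≤ a * |x| := mul_le_mul_of_nonneg_right hφ (abs_nonneg x)
  have key : ‖s * (1 + (t:ℂ)*Complex.exp (-Complex.I*φ)) -
      (t:ℂ)*Complex.exp (-Complex.I*φ)‖ / Dn^2 ≤ (‖s‖ + k)*k/(1+t) := by
    rw [div_le_div_iff₀ (pow_pos hDnpos 2) hupos]
    have h1 := mul_le_mul_of_nonneg_left hm (mul_nonneg (norm_nonneg s) hDnpos.le)
    have h2 := mul_self_le_mul_self hupos.le hm
    nlinarith [mul_le_mul_of_nonneg_right hX hupos.le, norm_nonneg s]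
  rw [norm_div, norm_mul, norm_pow, norm_exp_phi x φ s hs, norm_mul,
    norm_cpow_s x t s hs ht, ← hDn]
  calc Real.exp (φ*x) * (t^(-(1/2):ℝ) * ‖s * (1 + (t:ℂ)*Complex.exp (-Complex.I*φ)) -
        (t:ℂ)*Complex.exp (-Complex.I*φ)‖) / Dn^2
      = Real.exp (φ*x) * t^(-(1/2):ℝ) * (‖s * (1 + (t:ℂ)*Complex.exp (-Complex.I*φ)) -
        (t:ℂ)*Complex.exp (-Complex.I*φ)‖ / Dn^2) := by ring
    _ ≤ Real.exp (a*|x|) * t^(-(1/2):ℝ) * ((‖s‖ + k)*k/(1+t)) := by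
        apply mul_le_mul
        · exact mul_le_mul_of_nonneg_right hexp (Real.rpow_nonneg ht.le _)
        · exact key
        · positivity
        · positivity
    _ = (Real.exp (a*|x|) * ((‖s‖ + k) * k)) * (t^(-(1/2):ℝ)/(1+t)) := by ring

lemma hasDerivAt_phi (s : ℂ) (t : ℝ) (φ : ℝ)
    (hden : (1 + (t:ℂ) * Complex.exp (-Complex.I*φ)) ≠ 0) :
    HasDerivAt (fun y : ℝ => Complex.exp (-Complex.I*y*s) *
        ((t:ℂ)^(s-1) / (1 + (t:ℂ)*Complex.exp (-Complex.I*y))))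
      (-Complex.I * (Complex.exp (-Complex.I*φ*s) *
        ((t:ℂ)^(s-1) * (s * (1 + (t:ℂ)*Complex.exp (-Complex.I*φ)) -
          (t:ℂ)*Complex.exp (-Complex.I*φ))) / (1 + (t:ℂ)*Complex.exp (-Complex.I*φ))^2)) φ := by
  have h1 := (((hasDerivAt_id ((φ:ℝ):ℂ)).const_mul (-Complex.I)).mul_const s).cexp
  have h2 := ((hasDerivAt_id ((φ:ℝ):ℂ)).const_mul (-Complex.I)).cexp
  have h3 := (h2.const_mul (t:ℂ)).const_add 1
  have h4 := (hasDerivAt_const ((φ:ℝ):ℂ) ((t:ℂ)^(s-1))).div h3 hden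
  have h5 := (h1.mul h4).comp_ofReal
  refine h5.congr_deriv ?_
  simp only [id_eq, Pi.div_apply]
  set A := Complex.exp (-Complex.I*(φ:ℂ)*s) with hA
  set E := Complex.exp (-Complex.I*(φ:ℂ)) with hE
  set T := (t:ℂ)^(s-1) with hT
  set d := 1 + (t:ℂ)*E with hd
  field_simp
  ring

lemma hasDerivAt_t (s : ℂ) (hs0 : s ≠ 0) (φ : ℝ) (t : ℝ) (ht : 0 < t)
    (hden : (1 + (t:ℂ) * Complex.exp (-Complex.I*φ)) ≠ 0) :
    HasDerivAt (fun u : ℝ => Complex.exp (-Complex.I*φ*s) *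
        ((u:ℂ)^s / (1 + (u:ℂ)*Complex.exp (-Complex.I*φ))))
      (Complex.exp (-Complex.I*φ*s) *
        ((t:ℂ)^(s-1) * (s * (1 + (t:ℂ)*Complex.exp (-Complex.I*φ)) -
          (t:ℂ)*Complex.exp (-Complex.I*φ))) / (1 + (t:ℂ)*Complex.exp (-Complex.I*φ))^2) t := by
  have hs1 : s - 1 ≠ -1 := by
    intro h; apply hs0; linear_combination h
  have hcp : HasDerivAt (fun u : ℝ => ((u:ℂ)^s)) (s * (t:ℂ)^(s-1)) t := by
    have h0 := (hasDerivAt_ofReal_cpow_const' ht.ne' hs1).const_mul s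
    have heq : (fun y : ℝ => s * ((y:ℂ)^(s-1+1)/(s-1+1))) = fun y : ℝ => (y:ℂ)^s := by
      funext y
      rw [sub_add_cancel]
      field_simp
    rwa [heq] at h0
  have hden' : HasDerivAt (fun u : ℝ => 1 + (u:ℂ)*Complex.exp (-Complex.I*φ))
      (Complex.exp (-Complex.I*φ)) t := by
    have h1 : HasDerivAt (fun u : ℝ => ((u:ℂ))) 1 t := Complex.ofRealCLM.hasDerivAt
    simpa using (h1.mul_const (Complex.exp (-Complex.I*φ))).const_add 1
  have h4 := (hcp.div hden' hden).const_mul (Complex.exp (-Complex.I*φ*s))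
  have hts : (t:ℂ)^s = (t:ℂ)^(s-1) * (t:ℂ) := by
    conv_lhs => rw [show s = (s-1) + 1 by ring]
    rw [Complex.cpow_add _ _ (by exact_mod_cast ht.ne' : (t:ℂ) ≠ 0), Complex.cpow_one]
  refine h4.congr_deriv ?_
  rw [hts]
  set A := Complex.exp (-Complex.I*(φ:ℂ)*s) with hA
  set E := Complex.exp (-Complex.I*(φ:ℂ)) with hE
  set T := (t:ℂ)^(s-1) with hT
  set d := 1 + (t:ℂ)*E with hd
  field_simp

-- assume previous lemmas available; restate minimal versions as axioms for speed? no, include later.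
section
variable (x φ : ℝ) (s : ℂ)

-- continuity of DD on Ioi 0
lemma contOn_D (hφden : ∀ t : ℝ, 0 ≤ t → (1 + (t:ℂ)*Complex.exp (-Complex.I*φ)) ≠ 0) (hs1 : s ≠ 1) :
    ContinuousOn (fun t : ℝ => Complex.exp (-Complex.I*φ*s) * ((t:ℂ)^(s-1) *
        (s * (1 + (t:ℂ)*Complex.exp (-Complex.I*φ)) - (t:ℂ)*Complex.exp (-Complex.I*φ))) /
      (1 + (t:ℂ)*Complex.exp (-Complex.I*φ))^2) (Ioi 0) := by
  intro t ht
  have ht0 : (0:ℝ) < t := ht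
  have hc1 : ContinuousAt (fun u : ℝ => ((u:ℂ))^(s-1)) t :=
    Complex.continuousAt_ofReal_cpow_const t (s-1) (Or.inr ht0.ne')
  have hlin : ContinuousAt (fun u : ℝ => 1 + (u:ℂ)*Complex.exp (-Complex.I*φ)) t :=
    (continuousAt_const.add ((Complex.continuous_ofReal.continuousAt).mul continuousAt_const))
  apply ContinuousWithinAt.div
  · exact (ContinuousAt.mul continuousAt_const (hc1.mul
      ((continuousAt_const.mul hlin).sub
        ((Complex.continuous_ofReal.continuousAt).mul continuousAt_const)))).continuousWithinAt
  · exact (hlin.pow 2).continuousWithinAt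
  · exact pow_ne_zero 2 (hφden t ht0.le)
end
lemma norm_h_le (x a φ : ℝ) (s : ℂ) (hs : s = 1/2 + Complex.I * x)
    (ha : a < π) (hsa : 0 < Real.sin a) (hφ : |φ| ≤ a) {t : ℝ} (ht : 0 < t)
    (lb : Real.sin a / 4 * (1+t) ≤ ‖1 + (t:ℂ) * Complex.exp (-Complex.I*φ)‖) :
    ‖Complex.exp (-Complex.I*φ*s) * ((t:ℂ)^(s-1) / (1 + (t:ℂ)*Complex.exp (-Complex.I*φ)))‖
      ≤ (Real.exp (a*|x|) * (4/Real.sin a)) * (t^(-(1/2):ℝ)/(1+t)) := by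
  have hden0 : (0:ℝ) < Real.sin a / 4 * (1+t) := by positivity
  have hden : ‖1 + (t:ℂ) * Complex.exp (-Complex.I*φ)‖ ≠ 0 :=
    (lt_of_lt_of_le hden0 lb).ne'
  rw [norm_mul, norm_div, norm_exp_phi x φ s hs, norm_cpow_s x t s hs ht]
  have h1 : Real.exp (φ*x) ≤ Real.exp (a*|x|) := by
    apply Real.exp_le_exp.2
    calc φ*x ≤ |φ*x| := le_abs_self _
      _ = |φ| * |x| := abs_mul _ _
      _ ≤ a * |x| := mul_le_mul_of_nonneg_right hφ (abs_nonneg x)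
  have h2 : t^(-(1/2):ℝ) / ‖1 + (t:ℂ) * Complex.exp (-Complex.I*φ)‖
      ≤ t^(-(1/2):ℝ) / (Real.sin a / 4 * (1+t)) := by
    apply div_le_div_of_nonneg_left (Real.rpow_nonneg ht.le _) hden0 lb
  calc Real.exp (φ*x) * (t^(-(1/2):ℝ) / ‖1 + (t:ℂ) * Complex.exp (-Complex.I*φ)‖)
      ≤ Real.exp (a*|x|) * (t^(-(1/2):ℝ) / (Real.sin a / 4 * (1+t))) :=
        mul_le_mul h1 h2 (by positivity) (Real.exp_nonneg _)
    _ = (Real.exp (a*|x|) * (4/Real.sin a)) * (t^(-(1/2):ℝ)/(1+t)) := by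
        field_simp

section FTC
variable (x φ : ℝ) (s : ℂ)

lemma s_re (hs : s = 1/2 + Complex.I * x) : s.re = 1/2 := by rw [hs]; simp
lemma s_ne_zero (hs : s = 1/2 + Complex.I * x) : s ≠ 0 := by
  intro h; have := s_re x s hs; rw [h] at this; norm_num at this
lemma s_ne_one (hs : s = 1/2 + Complex.I * x) : s ≠ 1 := by
  intro h; have := s_re x s hs; rw [h] at this; norm_num at this

lemma ftc_zero (hs : s = 1/2 + Complex.I * x) (hφ : |φ| < π) :
    ∫ t in Ioi (0:ℝ), Complex.exp (-Complex.I*φ*s) * ((t:ℂ)^(s-1) *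
        (s * (1 + (t:ℂ)*Complex.exp (-Complex.I*φ)) - (t:ℂ)*Complex.exp (-Complex.I*φ))) /
      (1 + (t:ℂ)*Complex.exp (-Complex.I*φ))^2 = 0 := by
  have hpi := Real.pi_pos
  set a := max |φ| (π/2) with ha_def
  have hφa : |φ| ≤ a := le_max_left _ _
  have ha : a < π := by apply max_lt hφ; linarith
  have ha0 : 0 < a := lt_of_lt_of_le (by linarith) (le_max_right _ _)
  have hsa : 0 < Real.sin a := Real.sin_pos_of_pos_of_lt_pi ha0 ha
  have hlb : ∀ t : ℝ, 0 ≤ t →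
      Real.sin a / 4 * (1+t) ≤ ‖1 + (t:ℂ) * Complex.exp (-Complex.I*φ)‖ :=
    fun t ht => denom_lb ha hφa ht
  have hden : ∀ t : ℝ, 0 ≤ t → (1 + (t:ℂ) * Complex.exp (-Complex.I*φ)) ≠ 0 := by
    intro t ht h
    have := hlb t ht
    rw [h, norm_zero] at this
    nlinarith
  have hs0 := s_ne_zero x s hs
  set C := Real.exp (φ*x) * (4/Real.sin a) with hC
  have hCpos : 0 < C := by positivity
  have hnormP : ∀ t : ℝ, 0 < t →
      ‖Complex.exp (-Complex.I*φ*s) * ((t:ℂ)^s / (1 + (t:ℂ)*Complex.exp (-Complex.I*φ)))‖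
        = Real.exp (φ*x) * (t^((1:ℝ)/2) /
            ‖1 + (t:ℂ) * Complex.exp (-Complex.I*φ)‖) := by
    intro t ht
    rw [norm_mul, norm_div, norm_exp_phi x φ s hs,
      Complex.norm_cpow_eq_rpow_re_of_pos ht, s_re x s hs]
  have hboundP : ∀ t : ℝ, 0 < t →
      ‖Complex.exp (-Complex.I*φ*s) * ((t:ℂ)^s / (1 + (t:ℂ)*Complex.exp (-Complex.I*φ)))‖
        ≤ C * (t^((1:ℝ)/2) / (1+t)) := by
    intro t ht
    rw [hnormP t ht]
    have h1 : t^((1:ℝ)/2) / ‖1 + (t:ℂ) * Complex.exp (-Complex.I*φ)‖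
        ≤ t^((1:ℝ)/2) / (Real.sin a / 4 * (1+t)) :=
      div_le_div_of_nonneg_left (Real.rpow_nonneg ht.le _) (by positivity) (hlb t ht.le)
    calc Real.exp (φ*x) * (t^((1:ℝ)/2) / ‖1 + (t:ℂ) * Complex.exp (-Complex.I*φ)‖)
        ≤ Real.exp (φ*x) * (t^((1:ℝ)/2) / (Real.sin a / 4 * (1+t))) :=
          mul_le_mul_of_nonneg_left h1 (Real.exp_nonneg _)
      _ = C * (t^((1:ℝ)/2) / (1+t)) := by rw [hC]; field_simp
  have hval : Complex.exp (-Complex.I*φ*s) *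
      (((0:ℝ):ℂ)^s / (1 + ((0:ℝ):ℂ)*Complex.exp (-Complex.I*φ))) = 0 := by
    rw [Complex.ofReal_zero, Complex.zero_cpow hs0]
    simp
  have hcont : ContinuousWithinAt (fun t : ℝ => Complex.exp (-Complex.I*φ*s) *
      ((t:ℂ)^s / (1 + (t:ℂ)*Complex.exp (-Complex.I*φ)))) (Ici 0) 0 := by
    have h0 : Tendsto (fun t : ℝ => Complex.exp (-Complex.I*φ*s) *
        ((t:ℂ)^s / (1 + (t:ℂ)*Complex.exp (-Complex.I*φ)))) (nhdsWithin 0 (Ici 0)) (nhds 0) := by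
      apply squeeze_zero_norm' (a := fun t : ℝ => C * Real.sqrt t)
      · filter_upwards [self_mem_nhdsWithin] with t (ht : t ∈ Ici 0)
        rcases eq_or_lt_of_le (show (0:ℝ) ≤ t from ht) with h | h
        · rw [← h]
          simp [Complex.zero_cpow hs0]
        · calc ‖Complex.exp (-Complex.I*φ*s) * ((t:ℂ)^s / (1 + (t:ℂ)*Complex.exp (-Complex.I*φ)))‖
              ≤ C * (t^((1:ℝ)/2) / (1+t)) := hboundP t h
            _ ≤ C * t^((1:ℝ)/2) := by
                apply mul_le_mul_of_nonneg_left _ hCpos.le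
                calc t^((1:ℝ)/2)/(1+t) ≤ t^((1:ℝ)/2)/1 :=
                      div_le_div_of_nonneg_left (Real.rpow_nonneg h.le _) one_pos (by linarith)
                  _ = t^((1:ℝ)/2) := div_one _
            _ = C * Real.sqrt t := by rw [Real.sqrt_eq_rpow]
      · have h1 : Tendsto (fun t : ℝ => C * Real.sqrt t) (nhds 0) (nhds (C * Real.sqrt 0)) :=
          (continuous_const.mul Real.continuous_sqrt).tendsto 0
        simp only [Real.sqrt_zero, mul_zero] at h1
        exact h1.mono_left nhdsWithin_le_nhds
    have heq : (fun t : ℝ => Complex.exp (-Complex.I*φ*s) *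
        ((t:ℂ)^s / (1 + (t:ℂ)*Complex.exp (-Complex.I*φ)))) 0 = 0 := hval
    unfold ContinuousWithinAt
    rw [heq]
    exact h0
  have htend : Tendsto (fun t : ℝ => Complex.exp (-Complex.I*φ*s) *
      ((t:ℂ)^s / (1 + (t:ℂ)*Complex.exp (-Complex.I*φ)))) atTop (nhds 0) := by
    apply squeeze_zero_norm' (a := fun t : ℝ => C * t^(-(1/2):ℝ))
    · filter_upwards [eventually_gt_atTop (0:ℝ)] with t ht
      calc ‖Complex.exp (-Complex.I*φ*s) * ((t:ℂ)^s / (1 + (t:ℂ)*Complex.exp (-Complex.I*φ)))‖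
          ≤ C * (t^((1:ℝ)/2) / (1+t)) := hboundP t ht
        _ ≤ C * t^(-(1/2):ℝ) := by
            apply mul_le_mul_of_nonneg_left _ hCpos.le
            have h1 : t^((1:ℝ)/2)/(1+t) ≤ t^((1:ℝ)/2)/t :=
              div_le_div_of_nonneg_left (Real.rpow_nonneg ht.le _) ht (by linarith)
            have h2 : t^((1:ℝ)/2)/t = t^(-(1/2):ℝ) := by
              rw [show t^(-(1/2):ℝ) = t^((1:ℝ)/2) * t^(-1:ℝ) from by
                  rw [← Real.rpow_add ht]; norm_num,
                Real.rpow_neg_one, div_eq_mul_inv]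
            linarith
    · have h1 := tendsto_rpow_neg_atTop (by norm_num : (0:ℝ) < 1/2)
      have h2 := h1.const_mul C
      simpa using h2
  have hderiv : ∀ t ∈ Ioi (0:ℝ), HasDerivAt (fun t : ℝ => Complex.exp (-Complex.I*φ*s) *
      ((t:ℂ)^s / (1 + (t:ℂ)*Complex.exp (-Complex.I*φ))))
      (Complex.exp (-Complex.I*φ*s) * ((t:ℂ)^(s-1) *
        (s * (1 + (t:ℂ)*Complex.exp (-Complex.I*φ)) - (t:ℂ)*Complex.exp (-Complex.I*φ))) /
      (1 + (t:ℂ)*Complex.exp (-Complex.I*φ))^2) t :=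
    fun t ht => hasDerivAt_t s hs0 φ t ht (hden t (le_of_lt ht))
  have hint : IntegrableOn (fun t : ℝ => Complex.exp (-Complex.I*φ*s) * ((t:ℂ)^(s-1) *
      (s * (1 + (t:ℂ)*Complex.exp (-Complex.I*φ)) - (t:ℂ)*Complex.exp (-Complex.I*φ))) /
      (1 + (t:ℂ)*Complex.exp (-Complex.I*φ))^2) (Ioi 0) := by
    apply Integrable.mono'
      (dom_integrable.const_mul (Real.exp (a*|x|) * ((‖s‖ + 4/Real.sin a) * (4/Real.sin a))))
      ((contOn_D φ s hden (s_ne_one x s hs)).aestronglyMeasurable measurableSet_Ioi)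
    filter_upwards [ae_restrict_mem measurableSet_Ioi] with t ht
    exact norm_D_le x a φ s hs hsa hφa ht (hlb t (le_of_lt ht))
  have key := integral_Ioi_of_hasDerivAt_of_tendsto hcont hderiv hint htend
  rw [key, hval, sub_zero]
end FTC
section Deriv
variable (x : ℝ) (s : ℂ)

lemma contOn_h (φ : ℝ) (hφden : ∀ t : ℝ, 0 ≤ t → (1 + (t:ℂ)*Complex.exp (-Complex.I*φ)) ≠ 0) :
    ContinuousOn (fun t : ℝ => Complex.exp (-Complex.I*φ*s) *
      ((t:ℂ)^(s-1) / (1 + (t:ℂ)*Complex.exp (-Complex.I*φ)))) (Ioi 0) := by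
  intro t ht
  have ht0 : (0:ℝ) < t := ht
  have hc1 : ContinuousAt (fun u : ℝ => ((u:ℂ))^(s-1)) t :=
    Complex.continuousAt_ofReal_cpow_const t (s-1) (Or.inr ht0.ne')
  have hlin : ContinuousAt (fun u : ℝ => 1 + (u:ℂ)*Complex.exp (-Complex.I*φ)) t :=
    (continuousAt_const.add ((Complex.continuous_ofReal.continuousAt).mul continuousAt_const))
  exact (continuousAt_const.mul ((hc1.div hlin (hφden t ht0.le)))).continuousWithinAt

lemma G_hasDerivAt (hs : s = 1/2 + Complex.I * x) (φ₀ : ℝ) (hφ₀ : φ₀ ∈ Ioo (-π) π) :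
    HasDerivAt (fun φ : ℝ => ∫ t in Ioi (0:ℝ), Complex.exp (-Complex.I*φ*s) *
      ((t:ℂ)^(s-1) / (1 + (t:ℂ)*Complex.exp (-Complex.I*φ)))) 0 φ₀ := by
  have hpi := Real.pi_pos
  have hφ0 : |φ₀| < π := abs_lt.mpr ⟨hφ₀.1, hφ₀.2⟩
  set a := (|φ₀| + π)/2 with ha_def
  have ha : a < π := by rw [ha_def]; linarith
  have ha2 : π/2 ≤ a := by rw [ha_def]; cases abs_nonneg φ₀ |>.lt_or_eq <;> linarith [abs_nonneg φ₀]
  have ha0 : 0 < a := by linarith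
  have hsa : 0 < Real.sin a := Real.sin_pos_of_pos_of_lt_pi ha0 ha
  set ε := (π - |φ₀|)/2 with hε_def
  have hε : 0 < ε := by rw [hε_def]; linarith
  have hball : ∀ φ ∈ Metric.ball φ₀ ε, |φ| ≤ a := by
    intro φ hφ
    rw [Metric.mem_ball, Real.dist_eq] at hφ
    rw [ha_def]
    have := abs_sub_abs_le_abs_sub φ φ₀
    linarith
  have hφ₀a : |φ₀| ≤ a := hball φ₀ (Metric.mem_ball_self hε)
  have hlb : ∀ (φ : ℝ), |φ| ≤ a → ∀ t : ℝ, 0 ≤ t →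
      Real.sin a / 4 * (1+t) ≤ ‖1 + (t:ℂ) * Complex.exp (-Complex.I*φ)‖ :=
    fun φ hφ t ht => denom_lb ha hφ ht
  have hden : ∀ (φ : ℝ), |φ| ≤ a → ∀ t : ℝ, 0 ≤ t →
      (1 + (t:ℂ) * Complex.exp (-Complex.I*φ)) ≠ 0 := by
    intro φ hφ t ht h
    have := hlb φ hφ t ht
    rw [h, norm_zero] at this
    nlinarith
  set C₂ := Real.exp (a*|x|) * ((‖s‖ + 4/Real.sin a) * (4/Real.sin a)) with hC₂
  have key := hasDerivAt_integral_of_dominated_loc_of_deriv_le (μ := volume.restrict (Ioi 0))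
    (F := fun (φ : ℝ) (t : ℝ) => Complex.exp (-Complex.I*φ*s) *
      ((t:ℂ)^(s-1) / (1 + (t:ℂ)*Complex.exp (-Complex.I*φ))))
    (F' := fun (φ : ℝ) (t : ℝ) => -Complex.I * (Complex.exp (-Complex.I*φ*s) * ((t:ℂ)^(s-1) *
        (s * (1 + (t:ℂ)*Complex.exp (-Complex.I*φ)) - (t:ℂ)*Complex.exp (-Complex.I*φ))) /
      (1 + (t:ℂ)*Complex.exp (-Complex.I*φ))^2))
    (x₀ := φ₀) (bound := fun t : ℝ => C₂ * (t^(-(1/2):ℝ)/(1+t))) (Metric.ball_mem_nhds φ₀ hε)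
    ?_ ?_ ?_ ?_ ?_ ?_
  · obtain ⟨hFint, hderiv⟩ := key
    have hzero : (∫ t in Ioi (0:ℝ), -Complex.I * (Complex.exp (-Complex.I*φ₀*s) * ((t:ℂ)^(s-1) *
        (s * (1 + (t:ℂ)*Complex.exp (-Complex.I*φ₀)) - (t:ℂ)*Complex.exp (-Complex.I*φ₀))) /
      (1 + (t:ℂ)*Complex.exp (-Complex.I*φ₀))^2)) = 0 := by
      rw [integral_const_mul, ftc_zero x φ₀ s hs hφ0, mul_zero]
    rwa [hzero] at hderiv
  · filter_upwards [Metric.ball_mem_nhds φ₀ hε] with φ hφ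
    exact (contOn_h s φ (hden φ (hball φ hφ))).aestronglyMeasurable measurableSet_Ioi
  · apply Integrable.mono'
      (dom_integrable.const_mul (Real.exp (a*|x|) * (4/Real.sin a)))
      ((contOn_h s φ₀ (hden φ₀ hφ₀a)).aestronglyMeasurable measurableSet_Ioi)
    filter_upwards [ae_restrict_mem measurableSet_Ioi] with t ht
    exact norm_h_le x a φ₀ s hs ha hsa hφ₀a ht (hlb φ₀ hφ₀a t (le_of_lt ht))
  · exact ((contOn_D φ₀ s (hden φ₀ hφ₀a) (s_ne_one x s hs)).aestronglyMeasurable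
      measurableSet_Ioi).const_mul (-Complex.I)
  · filter_upwards [ae_restrict_mem measurableSet_Ioi] with t ht
    intro φ hφ
    rw [norm_mul, norm_neg, Complex.norm_I, one_mul]
    exact norm_D_le x a φ s hs hsa (hball φ hφ) ht (hlb φ (hball φ hφ) t (le_of_lt ht))
  · exact dom_integrable.const_mul _
  · filter_upwards [ae_restrict_mem measurableSet_Ioi] with t ht
    intro φ hφ
    exact hasDerivAt_phi s t φ (hden φ (hball φ hφ) t (le_of_lt ht))
end Deriv
section Base
variable (x : ℝ) (s : ℂ)

lemma base_case (hs : s = 1/2 + Complex.I * x) :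
    ∫ t in Ioi (0:ℝ), (t:ℂ)^(s-1)/(1+(t:ℂ)) = Complex.Gamma s * Complex.Gamma (1-s) := by
  have hre : s.re = 1/2 := s_re x s hs
  have h1re : (1-s).re = 1/2 := by simp [Complex.sub_re, hre]; norm_num
  have hbeta := Complex.Gamma_mul_Gamma_eq_betaIntegral (s := s) (t := 1-s)
    (by rw [hre]; norm_num) (by rw [h1re]; norm_num)
  rw [show s + (1-s) = 1 by ring, Complex.Gamma_one, one_mul] at hbeta
  rw [hbeta, Complex.betaIntegral]
  -- convert interval integral to Ioo
  rw [intervalIntegral.integral_of_le zero_le_one, MeasureTheory.integral_Ioc_eq_integral_Ioo]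
  -- change of variables
  have hderiv : ∀ y ∈ Ioo (0:ℝ) 1, HasDerivWithinAt (fun y : ℝ => y/(1-y))
      (1/(1-y)^2) (Ioo (0:ℝ) 1) y := by
    intro y hy
    have h1y : (1:ℝ) - y ≠ 0 := by have := hy.2; intro h; linarith
    have := (hasDerivAt_id y).div ((hasDerivAt_id y).const_sub 1) h1y
    apply HasDerivAt.hasDerivWithinAt
    refine this.congr_deriv ?_
    simp only [id_eq, one_mul, mul_neg_one, sub_neg_eq_add, sub_add_cancel]
  have hinj : InjOn (fun y : ℝ => y/(1-y)) (Ioo 0 1) := by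
    intro u hu v hv h
    have h1u : (1:ℝ) - u ≠ 0 := by have := hu.2; intro h'; linarith
    have h1v : (1:ℝ) - v ≠ 0 := by have := hv.2; intro h'; linarith
    field_simp at h
    nlinarith [h]
  have himg : (fun y : ℝ => y/(1-y)) '' Ioo 0 1 = Ioi 0 := by
    ext t
    constructor
    · rintro ⟨y, hy, rfl⟩
      exact div_pos hy.1 (by linarith [hy.2])
    · intro ht
      have ht0 : (0:ℝ) < t := ht
      refine ⟨t/(1+t), ⟨div_pos ht0 (by linarith), (div_lt_one (by linarith)).mpr (by linarith)⟩, ?_⟩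
      field_simp
      ring
  have hcv := integral_image_eq_integral_abs_deriv_smul measurableSet_Ioo hderiv hinj
    (fun t : ℝ => (t:ℂ)^(s-1)/(1+(t:ℂ)))
  rw [himg] at hcv
  rw [hcv]
  apply setIntegral_congr_fun measurableSet_Ioo
  intro y hy
  have hy0 : (0:ℝ) < y := hy.1
  have h1y : (0:ℝ) < 1 - y := by linarith [hy.2]
  have h1yne : ((1:ℂ) - (y:ℂ)) ≠ 0 := by
    intro h
    have : ((1-y:ℝ):ℂ) = 0 := by push_cast; linear_combination h
    rw [Complex.ofReal_eq_zero] at this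
    linarith
  simp only
  rw [abs_of_pos (by positivity : (0:ℝ) < 1/(1-y)^2)]
  have hcast : ((y/(1-y):ℝ):ℂ) = (y:ℂ)/(1-(y:ℂ)) := by push_cast; ring
  have e1 : ((y/(1-y):ℝ):ℂ)^(s-1) = ((y:ℝ):ℂ)^(s-1) * (((1-y)⁻¹:ℝ):ℂ)^(s-1) := by
    rw [show ((y/(1-y):ℝ):ℂ) = (((y * (1-y)⁻¹ : ℝ)):ℂ) by norm_num [div_eq_mul_inv],
      Complex.ofReal_mul, Complex.mul_cpow_ofReal_nonneg hy0.le (inv_nonneg.mpr h1y.le)]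
  have e2 : (((1-y)⁻¹:ℝ):ℂ)^(s-1) = (((1-y):ℝ):ℂ)^((1:ℂ)-s) := by
    rw [Complex.ofReal_inv, Complex.inv_cpow _ _ (by
      rw [Complex.arg_ofReal_of_nonneg h1y.le]
      exact Real.pi_ne_zero.symm), ← Complex.cpow_neg]
    ring_nf
  have e3 : (((1-y):ℝ):ℂ)^((1-s)-1) = (((1-y):ℝ):ℂ)^((1:ℂ)-s) / (((1-y):ℝ):ℂ) := by
    rw [Complex.cpow_sub _ _ (by push_cast; exact h1yne), Complex.cpow_one]
  have hdenom : 1 + ((y/(1-y):ℝ):ℂ) = 1/(1-(y:ℂ)) := by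
    rw [hcast]
    field_simp
    ring
  rw [e1, e2, hdenom,
    show ((1:ℂ) - (y:ℂ))^(1-s-1) = ((1:ℂ)-(y:ℂ))^((1:ℂ)-s) / ((1:ℂ)-(y:ℂ)) from by
      rw [Complex.cpow_sub _ _ h1yne, Complex.cpow_one],
    Complex.real_smul]
  push_cast
  field_simp
end Base
/-- For `s = 1/2 + i x` and `φ ∈ (-π, π)`, the rotated-ray integral converges and
`Γ(s)·Γ(1-s) = e^{-iφs} ∫₀^∞ t^(s-1)/(1 + t e^{-iφ}) dt`. -/
theorem stmt2 (x φ : ℝ) (hφ : φ ∈ Ioo (-π) π) (s : ℂ) (hs : s = 1/2 + Complex.I * x) :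
    IntegrableOn
      (fun t : ℝ => (t : ℂ) ^ (s - 1) / (1 + (t : ℂ) * Complex.exp (-Complex.I * φ))) (Ioi 0) ∧
    Complex.Gamma s * Complex.Gamma (1 - s)
      = Complex.exp (-Complex.I * φ * s) *
        ∫ t in Ioi (0:ℝ), (t : ℂ) ^ (s - 1) / (1 + (t : ℂ) * Complex.exp (-Complex.I * φ)) := by
  have hpi := Real.pi_pos
  have hφ0 : |φ| < π := abs_lt.mpr ⟨hφ.1, hφ.2⟩
  set a := max |φ| (π/2) with ha_def
  have hφa : |φ| ≤ a := le_max_left _ _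
  have ha : a < π := by apply max_lt hφ0; linarith
  have ha0 : 0 < a := lt_of_lt_of_le (by linarith) (le_max_right _ _)
  have hsa : 0 < Real.sin a := Real.sin_pos_of_pos_of_lt_pi ha0 ha
  have hlb : ∀ t : ℝ, 0 ≤ t →
      Real.sin a / 4 * (1+t) ≤ ‖1 + (t:ℂ) * Complex.exp (-Complex.I*φ)‖ :=
    fun t ht => denom_lb ha hφa ht
  have hden : ∀ t : ℝ, 0 ≤ t → (1 + (t:ℂ) * Complex.exp (-Complex.I*φ)) ≠ 0 := by
    intro t ht h
    have := hlb t ht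
    rw [h, norm_zero] at this
    nlinarith
  -- Integrability of the bare integrand
  have hint : IntegrableOn
      (fun t : ℝ => (t : ℂ) ^ (s - 1) / (1 + (t : ℂ) * Complex.exp (-Complex.I * φ))) (Ioi 0) := by
    apply Integrable.mono' (dom_integrable.const_mul (4/Real.sin a))
    · apply ContinuousOn.aestronglyMeasurable _ measurableSet_Ioi
      intro t ht
      have ht0 : (0:ℝ) < t := ht
      exact ((Complex.continuousAt_ofReal_cpow_const t (s-1) (Or.inr ht0.ne')).div
        (continuousAt_const.add ((Complex.continuous_ofReal.continuousAt).mul continuousAt_const))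
        (hden t ht0.le)).continuousWithinAt
    · filter_upwards [ae_restrict_mem measurableSet_Ioi] with t ht
      have ht0 : (0:ℝ) < t := ht
      rw [norm_div, norm_cpow_s x t s hs ht0]
      calc t^(-(1/2):ℝ) / ‖1 + (t:ℂ) * Complex.exp (-Complex.I*φ)‖
          ≤ t^(-(1/2):ℝ) / (Real.sin a / 4 * (1+t)) :=
            div_le_div_of_nonneg_left (Real.rpow_nonneg ht0.le _) (by positivity) (hlb t ht0.le)
        _ = 4/Real.sin a * (t^(-(1/2):ℝ)/(1+t)) := by field_simp
  refine ⟨hint, ?_⟩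
  -- the function G
  set G := fun ψ : ℝ => ∫ t in Ioi (0:ℝ), Complex.exp (-Complex.I*ψ*s) *
      ((t:ℂ)^(s-1) / (1 + (t:ℂ)*Complex.exp (-Complex.I*ψ))) with hG_def
  have h0mem : (0:ℝ) ∈ Ioo (-π) π := ⟨by linarith, hpi⟩
  have hGconst : G φ = G 0 := by
    have hder : ∀ y ∈ Ioo (-π) π, HasDerivWithinAt G ((fun _ : ℝ => (0:ℂ)) y) (Ioo (-π) π) y :=
      fun y hy => (G_hasDerivAt x s hs y hy).hasDerivWithinAt
    have hbd : ∀ y ∈ Ioo (-π) π, ‖(fun _ : ℝ => (0:ℂ)) y‖ ≤ 0 := fun y _ => by simp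
    have hkey := (convex_Ioo (-π) π).norm_image_sub_le_of_norm_hasDerivWithin_le
      hder hbd h0mem hφ
    rw [zero_mul] at hkey
    have := norm_le_zero_iff.mp hkey
    exact sub_eq_zero.mp this
  have hG0 : G 0 = ∫ t in Ioi (0:ℝ), (t:ℂ)^(s-1)/(1+(t:ℂ)) := by
    rw [hG_def]
    apply setIntegral_congr_fun measurableSet_Ioi
    intro t _
    simp
  have hGφ : G φ = Complex.exp (-Complex.I*φ*s) *
      ∫ t in Ioi (0:ℝ), (t : ℂ) ^ (s - 1) / (1 + (t : ℂ) * Complex.exp (-Complex.I * φ)) := by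
    rw [hG_def]
    exact integral_const_mul _ _
  rw [← hGφ, hGconst, hG0, base_case x s hs]
end

section
/- Let ν be a real number and φ ∈ (-π, π). Define f(z) = -cosh((z + i/2)·φ) / ( cosh(π·z) · (ν² - (z + i/2)²/4) ). Then the semicircle integrals I(R) = ∫₀^π f(R·e^{i·t}) · i·R·e^{i·t} dt, taken over positive integers R, tend to 0 as R → ∞ (R ranging over ℕ). -/
set_option maxHeartbeats 2000000
open Real Filter

lemma my_cosh_eq (z : ℂ) : Complex.cosh z =
    (Real.cosh z.re * Real.cos z.im : ℝ) + (Real.sinh z.re * Real.sin z.im : ℝ) * Complex.I := by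
  rw [← Complex.re_add_im z, Complex.cosh_add, Complex.cosh_mul_I, Complex.sinh_mul_I]
  push_cast [← Complex.ofReal_cosh, ← Complex.ofReal_sinh, ← Complex.ofReal_cos,
    ← Complex.ofReal_sin]
  simp [Complex.cosh_ofReal_re]
  ring

lemma my_sq_abs_cosh (z : ℂ) :
    ‖Complex.cosh z‖ ^ 2 = Real.sinh z.re ^ 2 + Real.cos z.im ^ 2 := by
  rw [Complex.sq_norm, my_cosh_eq, Complex.normSq_add_mul_I]
  have h1 := Real.sin_sq_add_cos_sq z.im
  have h2 := Real.cosh_sq z.re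
  nlinarith

lemma my_abs_cosh_le (z : ℂ) : ‖Complex.cosh z‖ ≤ Real.exp |z.re| := by
  have h := my_sq_abs_cosh z
  have h2 : Real.cos z.im ^ 2 ≤ 1 := by
    have := Real.sin_sq_add_cos_sq z.im; nlinarith [sq_nonneg (Real.sin z.im)]
  have h3 : ‖Complex.cosh z‖ ^ 2 ≤ Real.cosh z.re ^ 2 := by
    rw [Real.cosh_sq]; nlinarith
  have h4 : ‖Complex.cosh z‖ ≤ Real.cosh z.re := by
    nlinarith [norm_nonneg (Complex.cosh z), Real.cosh_pos (x := z.re)]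
  refine h4.trans ?_
  rw [← Real.cosh_abs]
  rw [Real.cosh_eq]
  have : Real.exp (-|z.re|) ≤ Real.exp |z.re| := Real.exp_le_exp.2 (neg_le_self (abs_nonneg _))
  nlinarith [Real.exp_pos |z.re|]

lemma my_sinh_le_abs_cosh (z : ℂ) : |Real.sinh z.re| ≤ ‖Complex.cosh z‖ := by
  have h := my_sq_abs_cosh z
  nlinarith [norm_nonneg (Complex.cosh z), sq_nonneg (Real.cos z.im),
    abs_nonneg (Real.sinh z.re), sq_abs (Real.sinh z.re)]

lemma my_cos_le_abs_cosh (z : ℂ) : |Real.cos z.im| ≤ ‖Complex.cosh z‖ := by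
  have h := my_sq_abs_cosh z
  nlinarith [norm_nonneg (Complex.cosh z), sq_nonneg (Real.sinh z.re),
    abs_nonneg (Real.cos z.im), sq_abs (Real.cos z.im)]

lemma my_div_bound {a b c m c0 : ℝ} (ha : 0 ≤ a) (hb : 0 ≤ b) (hm : 0 ≤ m) (hc0 : 0 < c0)
    (hab : a ≤ m * b) (hc : c0 ≤ c) : a / (b * c) ≤ m / c0 := by
  rcases eq_or_lt_of_le hb with h | h
  · have ha0 : a = 0 := le_antisymm (by nlinarith) ha
    simp [ha0]
    positivity
  · have hcpos : 0 < c := lt_of_lt_of_le hc0 hc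
    rw [div_le_div_iff₀ (by positivity) hc0]
    nlinarith

/-- The semicircle contributions (at integer radii `R`) of the Sommerfeld–Watson
integrand with trivial numerator vanish as `R → ∞`. -/
theorem stmt6 (ν φ : ℝ) (hφ : φ ∈ Set.Ioo (-π) π)
    (f : ℂ → ℂ)
    (hf : ∀ z : ℂ, f z = -Complex.cosh ((z + Complex.I/2) * (φ : ℂ)) /
        (Complex.cosh ((π : ℂ) * z) * ((ν : ℂ)^2 - (z + Complex.I/2)^2 / 4)))
    (Iarc : ℕ → ℂ)
    (hI : ∀ R : ℕ, Iarc R = ∫ t in (0:ℝ)..π,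
        f ((R : ℂ) * Complex.exp (Complex.I * t)) *
          (Complex.I * (R : ℂ) * Complex.exp (Complex.I * t))) :
    Tendsto Iarc atTop (nhds 0) := by
  have hφπ : |φ| ≤ π := by
    rw [abs_le]; exact ⟨hφ.1.le, hφ.2.le⟩
  set M : ℝ := 2 * Real.exp π with hM
  clear_value M
  have hMpos : 0 < M := by rw [hM]; positivity
  -- the squeeze bound
  have hbnd : ∀ᶠ R : ℕ in atTop, ‖Iarc R‖ ≤ (64 * Real.exp π * π) / (R : ℝ) := by
    have hev1 : ∀ᶠ R : ℕ in atTop, (4 : ℕ) ≤ R := eventually_ge_atTop 4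
    have hev2 : ∀ᶠ R : ℕ in atTop, 32 * ν ^ 2 ≤ (R : ℝ) ^ 2 := by
      have h : Tendsto (fun R : ℕ => (R : ℝ) ^ 2) atTop atTop :=
        (tendsto_pow_atTop (two_ne_zero)).comp tendsto_natCast_atTop_atTop
      exact h.eventually_ge_atTop _
    filter_upwards [hev1, hev2] with R hR4 hRν
    have hRpos : (0 : ℝ) < R := by positivity
    have hR4' : (4 : ℝ) ≤ R := by exact_mod_cast hR4
    -- pointwise bound on the integrand
    have key : ∀ t ∈ Set.uIoc (0:ℝ) π,
        ‖f ((R : ℂ) * Complex.exp (Complex.I * t)) *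
          (Complex.I * (R : ℂ) * Complex.exp (Complex.I * t))‖ ≤ 64 * Real.exp π / R := by
      intro t ht
      rw [Set.uIoc_of_le Real.pi_pos.le] at ht
      have hsin : 0 ≤ Real.sin t := Real.sin_nonneg_of_nonneg_of_le_pi ht.1.le ht.2
      set z : ℂ := (R : ℂ) * Complex.exp (Complex.I * t) with hzdef
      have hIt : Complex.I * (t : ℂ) = (t : ℂ) * Complex.I := mul_comm _ _
      have hzre : z.re = R * Real.cos t := by
        simp [hzdef, hIt, Complex.exp_mul_I, Complex.add_re, Complex.add_im,
          ← Complex.ofReal_cos, ← Complex.ofReal_sin]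
      have hzim : z.im = R * Real.sin t := by
        simp [hzdef, hIt, Complex.exp_mul_I, Complex.add_re, Complex.add_im,
          ← Complex.ofReal_cos, ← Complex.ofReal_sin]
      have habsz : ‖z‖ = R := by
        simp [hzdef, Complex.norm_exp]
      set x : ℝ := R * Real.cos t with hxdef
      set y : ℝ := R * Real.sin t with hydef
      set w : ℂ := z + Complex.I / 2 with hwdef
      clear_value z x y w
      -- re/im facts
      have hwre : (w * (φ : ℂ)).re = x * φ := by
        simp [hwdef, Complex.mul_re, Complex.add_re, Complex.add_im, hzre]
      have hπzre : ((π : ℂ) * z).re = π * x := by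
        simp [Complex.mul_re, hzre, hzim]
      have hπzim : ((π : ℂ) * z).im = π * y := by
        simp [Complex.mul_im, hzre, hzim]
      set A : ℝ := ‖Complex.cosh (w * (φ : ℂ))‖ with hA
      set B : ℝ := ‖Complex.cosh ((π : ℂ) * z)‖ with hB
      set C : ℝ := ‖(ν : ℂ)^2 - w^2 / 4‖ with hC
      clear_value A B C
      -- A ≤ M * B
      have hAB : A ≤ M * B := by
        have hAle : A ≤ Real.exp (|x| * |φ|) := by
          rw [hA]
          have := my_abs_cosh_le (w * (φ : ℂ))
          rwa [hwre, abs_mul] at this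
        rcases le_or_gt 1 |x| with hx1 | hx1
        · -- |x| ≥ 1 : use sinh lower bound
          have hBl : |Real.sinh (π * x)| ≤ B := by
            rw [hB]
            have := my_sinh_le_abs_cosh ((π : ℂ) * z); rwa [hπzre] at this
          have hsinh : Real.sinh (π * |x|) = |Real.sinh (π * x)| := by
            rcases abs_cases x with ⟨h1, h2⟩ | ⟨h1, h2⟩
            · rw [h1, abs_of_nonneg (Real.sinh_nonneg_iff.2 (by nlinarith [Real.pi_pos]))]
            · rw [h1, abs_of_nonpos (Real.sinh_nonpos_iff.2 (by nlinarith [Real.pi_pos])),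
                show π * -x = -(π * x) by ring, Real.sinh_neg]
          have hexp2 : (2:ℝ) ≤ Real.exp (π * |x|) := by
            have : (2:ℝ) ≤ Real.exp 1 := by
              have := Real.add_one_le_exp 1; linarith
            refine this.trans (Real.exp_le_exp.2 ?_)
            nlinarith [Real.pi_gt_three]
          have hBl2 : Real.exp (π * |x|) / 4 ≤ B := by
            have hs : Real.sinh (π * |x|) ≥ (Real.exp (π * |x|) - 1) / 2 := by
              rw [Real.sinh_eq]
              have : Real.exp (-(π * |x|)) ≤ 1 := Real.exp_le_one_iff.2 (by nlinarith [Real.pi_pos, abs_nonneg x])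
              linarith
            calc Real.exp (π * |x|) / 4 ≤ (Real.exp (π * |x|) - 1) / 2 := by linarith
              _ ≤ Real.sinh (π * |x|) := hs
              _ = |Real.sinh (π * x)| := hsinh
              _ ≤ B := hBl
          have hAle2 : A ≤ Real.exp (π * |x|) := by
            refine hAle.trans (Real.exp_le_exp.2 ?_)
            nlinarith [abs_nonneg x]
          have hM4 : (4:ℝ) ≤ M := by
            have : (2:ℝ) ≤ Real.exp π := by
              have : (2:ℝ) ≤ Real.exp 1 := by have := Real.add_one_le_exp 1; linarith
              exact this.trans (Real.exp_le_exp.2 (by nlinarith [Real.pi_gt_three]))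
            rw [hM]; nlinarith
          calc A ≤ Real.exp (π * |x|) := hAle2
            _ = 4 * (Real.exp (π * |x|) / 4) := by ring
            _ ≤ 4 * B := by
                have hBnn : 0 ≤ Real.exp (π * |x|) / 4 := by positivity
                nlinarith
            _ ≤ M * B := by
                have hBnn : (0:ℝ) ≤ B := hB ▸ norm_nonneg _
                nlinarith
        · -- |x| < 1 : use cos lower bound near the top
          have hAle2 : A ≤ Real.exp π := by
            refine hAle.trans (Real.exp_le_exp.2 ?_)
            nlinarith [abs_nonneg φ, abs_nonneg x, Real.pi_pos]
          have hBl : |Real.cos (π * y)| ≤ B := by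
            rw [hB]
            have := my_cos_le_abs_cosh ((π : ℂ) * z); rwa [hπzim] at this
          -- y is close to R
          have hy0 : 0 ≤ y := by rw [hydef]; positivity
          have hxy : x ^ 2 + y ^ 2 = (R:ℝ) ^ 2 := by
            have := Real.sin_sq_add_cos_sq t
            rw [hxdef, hydef]; nlinarith
          have hyR : y ≤ R := by nlinarith [sq_nonneg x]
          have hRy : (R:ℝ) - y ≤ 1 / 4 := by
            nlinarith [sq_nonneg x, abs_nonneg x, sq_abs x]
          -- |cos (π y)| = cos (π (R - y)) ≥ 1/2
          have hsinR : Real.sin (π * R) = 0 := by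
            rw [mul_comm]; exact Real.sin_nat_mul_pi R
          have hcosR : |Real.cos (π * R)| = 1 := by
            have h := Real.sin_sq_add_cos_sq (π * R)
            rw [hsinR] at h
            rw [← Real.sqrt_sq_eq_abs]
            rw [show Real.cos (π * R) ^ 2 = 1 by nlinarith]
            exact Real.sqrt_one
          set s : ℝ := π * ((R:ℝ) - y) with hs
          clear_value s
          have hs0 : 0 ≤ s := by
            rw [hs]; exact mul_nonneg Real.pi_pos.le (by linarith)
          have hsle : s ≤ π / 3 := by
            rw [hs]
            have h := mul_le_mul_of_nonneg_left hRy Real.pi_pos.le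
            linarith [Real.pi_pos]
          have hcoss : 1 / 2 ≤ Real.cos s := by
            rw [← Real.cos_pi_div_three]
            exact Real.cos_le_cos_of_nonneg_of_le_pi hs0
              (by linarith [Real.pi_pos, hsle]) hsle
          have hcosy : |Real.cos (π * y)| = Real.cos s := by
            have heq : π * y = π * R - s := by rw [hs]; ring
            rw [heq, Real.cos_sub, hsinR]
            have hcoss0 : 0 ≤ Real.cos s := by linarith
            rw [zero_mul, add_zero, abs_mul, hcosR, one_mul, abs_of_nonneg hcoss0]
          have hB2 : 1 / 2 ≤ B := by
            rw [← hcosy] at hcoss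
            exact hcoss.trans hBl
          calc A ≤ Real.exp π := hAle2
            _ = M * (1/2) := by rw [hM]; ring
            _ ≤ M * B := by nlinarith
      -- C ≥ R^2/32
      have hCl : (R:ℝ)^2 / 32 ≤ C := by
        have hw : (R:ℝ) / 2 ≤ ‖w‖ := by
          have hzw : z = w + -(Complex.I/2) := by rw [hwdef]; ring
          have h1 : ‖z‖ ≤ ‖w‖ + 1/2 := by
            rw [hzw]
            calc ‖w + -(Complex.I/2)‖
                ≤ ‖w‖ + ‖-(Complex.I/2)‖ := norm_add_le _ _
              _ = ‖w‖ + 1/2 := by rw [norm_neg]; simp [norm_div]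
          rw [habsz] at h1
          linarith
        have hw2 : (R:ℝ)^2 / 4 ≤ ‖w^2‖ := by
          rw [norm_pow]
          nlinarith [norm_nonneg w]
        have h3 : ‖w^2/4‖ - ‖(ν : ℂ)^2‖ ≤ C := by
          rw [hC]
          have := norm_sub_norm_le (w^2/4) ((ν : ℂ)^2)
          rw [norm_sub_rev] at this
          simpa using this
        have h4 : ‖(ν : ℂ)^2‖ = ν^2 := by
          rw [← Complex.ofReal_pow]
          simp [Complex.norm_real, sq_abs, abs_of_nonneg (sq_nonneg ν)]
        have h5 : ‖w^2/4‖ = ‖w^2‖ / 4 := by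
          rw [norm_div]; norm_num
        rw [h4, h5] at h3
        nlinarith
      -- combine
      have hnorm : ‖f z * (Complex.I * (R : ℂ) * Complex.exp (Complex.I * t))‖
          = (A / (B * C)) * R := by
        rw [hf z]
        rw [norm_mul, norm_div, norm_mul, norm_mul, norm_mul]
        rw [norm_neg]
        have he : ‖Complex.exp (Complex.I * t)‖ = 1 := by
          simp [Complex.norm_exp]
        rw [he, Complex.norm_I]
        simp only [← hwdef, ← hA, ← hB, ← hC, Complex.norm_natCast]
        ring
      rw [hnorm]
      have hfle : A / (B * C) ≤ M / ((R:ℝ)^2/32) :=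
        my_div_bound (hA ▸ norm_nonneg _) (hB ▸ norm_nonneg _) hMpos.le
          (by positivity) hAB hCl
      calc A / (B * C) * R ≤ M / ((R:ℝ)^2/32) * R :=
            mul_le_mul_of_nonneg_right hfle hRpos.le
        _ = 64 * Real.exp π / R := by
            rw [hM]; field_simp; ring
    have := intervalIntegral.norm_integral_le_of_norm_le_const key
    rw [← hI R] at this
    calc ‖Iarc R‖ ≤ 64 * Real.exp π / R * |π - 0| := this
      _ = 64 * Real.exp π * π / R := by
          rw [sub_zero, abs_of_pos Real.pi_pos]; ring
  refine squeeze_zero_norm' hbnd ?_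
  exact tendsto_const_nhds.div_atTop tendsto_natCast_atTop_atTop
end

section
/- Let n be a nonzero real number, and define the complex-valued functions of the real variable ν: V(ν) = i·ν/(ν² + n²/4) and N(ν) = n/(ν² + n²/4). Then for every real ν, both V and N are differentiable and -i·V'(ν) = N(ν)²/4 + V(ν)² and -i·N'(ν) = 2·N(ν)·V(ν). -/
/-- Closure relations `D_ν V = N²/4 + V²` and `D_ν N = 2NV` with `D_ν = -i ∂_ν`. -/
theorem stmt14 (n : ℝ) (hn : n ≠ 0)
    (V N : ℝ → ℂ)
    (hV : ∀ ν : ℝ, V ν = Complex.I * ν / ((ν : ℂ)^2 + (n : ℂ)^2/4))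
    (hN : ∀ ν : ℝ, N ν = (n : ℂ) / ((ν : ℂ)^2 + (n : ℂ)^2/4)) :
    ∀ ν : ℝ, DifferentiableAt ℝ V ν ∧ DifferentiableAt ℝ N ν ∧
      -Complex.I * deriv V ν = (N ν)^2/4 + (V ν)^2 ∧
      -Complex.I * deriv N ν = 2 * N ν * V ν := by
  have hVe : V = fun x : ℝ => Complex.I * x / ((x : ℂ)^2 + (n : ℂ)^2/4) := funext hV
  have hNe : N = fun x : ℝ => (n : ℂ) / ((x : ℂ)^2 + (n : ℂ)^2/4) := funext hN
  subst hVe hNe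
  intro ν
  have hd : ((ν : ℂ)^2 + (n : ℂ)^2/4) ≠ 0 := by
    have h : ((ν : ℂ)^2 + (n : ℂ)^2/4) = ((ν^2 + n^2/4 : ℝ) : ℂ) := by push_cast; ring
    rw [h, Complex.ofReal_ne_zero]
    positivity
  have hc : HasDerivAt (fun x : ℝ => (x : ℂ)) 1 ν := by
    simpa using (hasDerivAt_id ν).ofReal_comp
  have hden : HasDerivAt (fun x : ℝ => (x : ℂ)^2 + (n : ℂ)^2/4) (2 * (ν:ℂ)) ν := by
    have := (hc.mul hc).add_const ((n : ℂ)^2/4)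
    simpa [pow_two, two_mul] using this
  have hnum : HasDerivAt (fun x : ℝ => Complex.I * (x : ℂ)) Complex.I ν := by
    simpa using hc.const_mul Complex.I
  have hVd : HasDerivAt (fun x : ℝ => Complex.I * x / ((x : ℂ)^2 + (n : ℂ)^2/4))
      ((Complex.I * ((ν : ℂ)^2 + (n : ℂ)^2/4) - Complex.I * ν * (2 * (ν:ℂ))) /
        ((ν : ℂ)^2 + (n : ℂ)^2/4)^2) ν := hnum.div hden hd
  have hNd : HasDerivAt (fun x : ℝ => (n : ℂ) / ((x : ℂ)^2 + (n : ℂ)^2/4))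
      ((0 * ((ν : ℂ)^2 + (n : ℂ)^2/4) - (n : ℂ) * (2 * (ν:ℂ))) /
        ((ν : ℂ)^2 + (n : ℂ)^2/4)^2) ν := (hasDerivAt_const ν ((n : ℂ))).div hden hd
  refine ⟨hVd.differentiableAt, hNd.differentiableAt, ?_, ?_⟩
  · rw [hVd.deriv]
    have key : ∀ d : ℂ, d ≠ 0 → d = (ν:ℂ)^2 + (n:ℂ)^2/4 →
        -Complex.I * ((Complex.I * d - Complex.I * ν * (2 * (ν:ℂ))) / d ^ 2)
          = ((n:ℂ) / d)^2/4 + (Complex.I * ν / d)^2 := by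
      intro d hd0 hdef
      field_simp
      linear_combination 4 * hdef + (-4*d + 4*(ν:ℂ)^2) * Complex.I_sq
    simpa using key _ hd rfl
  · rw [hNd.deriv]
    have key : ∀ d : ℂ, d ≠ 0 →
        -Complex.I * ((0 * d - (n:ℂ) * (2 * (ν:ℂ))) / d ^ 2)
          = 2 * ((n:ℂ) / d) * (Complex.I * ν / d) := by
      intro d hd0
      field_simp
      ring
    simpa using key _ hd
end

section
/- For every real z with 0 < z < 1, log²(1 - z) = 2·∫₀^z log(1 - u·z)/(u - 1) du + Σ_{k=1}^{∞} z^{2k}/k², where log is the real logarithm and the series is the dilogarithm Li₂(z²). -/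
open MeasureTheory Real Finset

noncomputable def aa (z : ℝ) (n : ℕ) : ℝ := z^(n+1)/((n:ℝ)+1)

lemma hasSum_aa {z : ℝ} (h : |z| < 1) : HasSum (aa z) (-Real.log (1 - z)) := by
  have := hasSum_pow_div_log_of_abs_lt_one h
  convert this using 2 with n
  rfl

lemma aa_nonneg {z : ℝ} (h0 : 0 ≤ z) (n : ℕ) : 0 ≤ aa z n := by
  apply div_nonneg (pow_nonneg h0 _); positivity

-- partial sum identity
lemma sq_partial (z : ℝ) (N : ℕ) :
    ∑ n ∈ range N, aa z n * (2 * ∑ j ∈ range (n+1), aa z j - aa z n)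
      = (∑ j ∈ range N, aa z j)^2 := by
  induction N with
  | zero => simp
  | succ N ih => rw [Finset.sum_range_succ, ih, Finset.sum_range_succ (f := aa z)]; ring


lemma habs {z : ℝ} (h0 : 0 < z) (h1 : z < 1) : |z| < 1 := abs_lt.2 ⟨by linarith, h1⟩

lemma summable_aa {z : ℝ} (h0 : 0 < z) (h1 : z < 1) : Summable (aa z) :=
  (hasSum_aa (habs h0 h1)).summable

lemma partial_le {z : ℝ} (h0 : 0 < z) (h1 : z < 1) (N : ℕ) :
    ∑ j ∈ range N, aa z j ≤ -Real.log (1 - z) :=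
  (Summable.sum_le_tsum _ (fun n _ => aa_nonneg h0.le n) (summable_aa h0 h1)).trans_eq
    (hasSum_aa (habs h0 h1)).tsum_eq

lemma hasSum_b {z : ℝ} (h0 : 0 < z) (h1 : z < 1) :
    HasSum (fun n => aa z n * (2 * ∑ j ∈ range (n+1), aa z j - aa z n))
      ((Real.log (1 - z))^2) := by
  set L := -Real.log (1 - z) with hL
  have key : ∀ n : ℕ, aa z n ≤ ∑ j ∈ range (n+1), aa z j := by
    intro n
    rw [Finset.sum_range_succ]
    have := Finset.sum_nonneg (fun j (_ : j ∈ range n) => aa_nonneg h0.le j)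
    linarith
  have hs : Summable (fun n => aa z n * (2 * ∑ j ∈ range (n+1), aa z j - aa z n)) := by
    apply Summable.of_nonneg_of_le (fun n => ?_) (fun n => ?_)
      ((summable_aa h0 h1).mul_right (2*L))
    · nlinarith [aa_nonneg h0.le n, key n]
    · have h2' : 2 * ∑ j ∈ range (n+1), aa z j - aa z n ≤ 2*L := by
        have := partial_le h0 h1 (n+1)
        have := aa_nonneg h0.le n
        linarith
      exact mul_le_mul_of_nonneg_left h2' (aa_nonneg h0.le n)
  rw [hs.hasSum_iff_tendsto_nat]
  have he : (fun N => ∑ n ∈ range N, aa z n * (2 * ∑ j ∈ range (n+1), aa z j - aa z n))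
      = fun N => (∑ j ∈ range N, aa z j)^2 := funext (sq_partial z)
  rw [he]
  have ht := ((hasSum_aa (habs h0 h1)).tendsto_sum_nat).pow 2
  simpa [neg_pow] using ht

lemma integral_term {z : ℝ} (h0 : 0 < z) (h1 : z < 1) (n : ℕ) :
    ∫ u in (0:ℝ)..z, z^(n+1) * u^(n+1) / (((n:ℝ)+1) * (1-u))
      = aa z n * (-Real.log (1 - z) - ∑ j ∈ range (n+1), aa z j) := by
  set F : ℝ → ℝ := fun u =>
    (z^(n+1)/((n:ℝ)+1)) * (-Real.log (1-u) - ∑ j ∈ range (n+1), u^(j+1)/((j:ℝ)+1)) with hF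
  have hder : ∀ u ∈ Set.uIcc (0:ℝ) z,
      HasDerivAt F (z^(n+1) * u^(n+1) / (((n:ℝ)+1) * (1-u))) u := by
    intro u hu
    rw [Set.uIcc_of_le h0.le] at hu
    have hu1 : u < 1 := lt_of_le_of_lt hu.2 h1
    have hne : (1:ℝ) - u ≠ 0 := by linarith
    have hlog : HasDerivAt (fun u : ℝ => Real.log (1-u)) (-(1-u)⁻¹) u := by
      have := (Real.hasDerivAt_log hne).comp u (((hasDerivAt_id u).const_sub 1))
      simpa [Function.comp_def] using this
    have hsum : HasDerivAt (fun u : ℝ => ∑ j ∈ range (n+1), u^(j+1)/((j:ℝ)+1))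
        (∑ j ∈ range (n+1), u^j) u := by
      apply HasDerivAt.fun_sum
      intro j _
      have := (hasDerivAt_pow (j+1) u).div_const ((j:ℝ)+1)
      refine this.congr_deriv ?_
      push_cast
      field_simp [show ((j:ℝ)+1) ≠ 0 by positivity]
    have hd := ((hlog.neg.sub hsum).const_mul (z^(n+1)/((n:ℝ)+1)))
    refine hd.congr_deriv ?_
    have hu2 : u ≠ 1 := ne_of_lt hu1
    have hgeo : ∑ j ∈ range (n+1), u^j = (1 - u^(n+1))/(1-u) := by
      rw [geom_sum_eq hu2]
      rw [show (1:ℝ)-u^(n+1) = -(u^(n+1)-1) by ring, show (1:ℝ)-u = -(u-1) by ring,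
        neg_div_neg_eq]
    rw [hgeo]
    have hn : ((n:ℝ)+1) ≠ 0 := by positivity
    field_simp
    ring
  have hint : IntervalIntegrable
      (fun u => z^(n+1) * u^(n+1) / (((n:ℝ)+1) * (1-u))) volume 0 z := by
    apply ContinuousOn.intervalIntegrable
    apply ContinuousOn.div
    · fun_prop
    · fun_prop
    · intro u hu
      rw [Set.uIcc_of_le h0.le] at hu
      have : u < 1 := lt_of_le_of_lt hu.2 h1
      have : (1:ℝ) - u ≠ 0 := by linarith
      positivity
  rw [intervalIntegral.integral_eq_sub_of_hasDerivAt hder hint]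
  have hF0 : F 0 = 0 := by simp [hF]
  rw [hF0, sub_zero, hF]
  simp only [aa]

lemma integral_swap {z : ℝ} (h0 : 0 < z) (h1 : z < 1) :
    ∫ u in (0:ℝ)..z, Real.log (1 - u*z) / (u - 1)
      = ∑' n : ℕ, aa z n * (-Real.log (1 - z) - ∑ j ∈ range (n+1), aa z j) := by
  set f : ℕ → ℝ → ℝ := fun n u => z^(n+1) * u^(n+1) / (((n:ℝ)+1) * (1-u)) with hf
  set C : ℕ → ℝ := fun n => z^(n+1) * z^(n+1) / (((n:ℝ)+1) * (1-z)) with hC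
  have hCnn : ∀ n, 0 ≤ C n := by
    intro n
    apply div_nonneg (by positivity)
    have : (0:ℝ) < 1 - z := by linarith
    positivity
  have hCsum : Summable C := by
    apply Summable.of_nonneg_of_le hCnn (fun n => ?_)
      ((summable_geometric_of_lt_one (r := z^2) (by positivity)
        (by nlinarith)).div_const (1-z))
    have hnum : z^(n+1) * z^(n+1) ≤ (z^2)^n := by
      rw [← pow_add, ← pow_mul]
      apply pow_le_pow_of_le_one h0.le h1.le; omega
    have hden : (1:ℝ) - z ≤ ((n:ℝ)+1) * (1-z) := by
      have h1z : (0:ℝ) < 1 - z := by linarith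
      nlinarith [Nat.cast_nonneg (α := ℝ) n]
    exact div_le_div₀ (by positivity) hnum (by linarith) hden
  have hpt : ∀ u ∈ Set.Ioc (0:ℝ) z,
      HasSum (fun n => f n u) (Real.log (1 - u*z) / (u - 1)) := by
    intro u hu
    have hu1 : u < 1 := lt_of_le_of_lt hu.2 h1
    have habs' : |u * z| < 1 := by
      rw [abs_of_nonneg (by nlinarith [hu.1.le] : (0:ℝ) ≤ u * z)]
      nlinarith [hu.1, hu.2]
    have h := (hasSum_pow_div_log_of_abs_lt_one habs').div_const (1-u)
    have he1 : (fun n : ℕ => (u*z)^(n+1)/((n:ℕ)+1 : ℝ)/(1-u)) = fun n => f n u := by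
      funext n
      rw [hf]
      rw [mul_pow, div_div]
      ring
    have he2 : -Real.log (1 - u*z)/(1-u) = Real.log (1 - u*z) / (u - 1) := by
      rw [show u - 1 = -(1-u) by ring, div_neg, neg_div]
    rw [he2] at h
    exact he1 ▸ h
  have hmeas : ∀ n : ℕ, AEStronglyMeasurable (f n) (volume.restrict (Set.Ioc (0:ℝ) z)) := by
    intro n
    apply Measurable.aestronglyMeasurable
    apply Measurable.div (by fun_prop) (by fun_prop)
  have hbound : ∀ n : ℕ, ∫⁻ u in Set.Ioc (0:ℝ) z, ‖f n u‖₊ ∂volume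
      ≤ ENNReal.ofReal (C n) * ENNReal.ofReal z := by
    intro n
    calc ∫⁻ u in Set.Ioc (0:ℝ) z, ‖f n u‖₊ ∂volume
        ≤ ∫⁻ _ in Set.Ioc (0:ℝ) z, ENNReal.ofReal (C n) ∂volume := by
          apply setLIntegral_mono measurable_const
          intro u hu
          have hu1 : u < 1 := lt_of_le_of_lt hu.2 h1
          have h1u : (0:ℝ) < 1 - u := by linarith
          have hfnn : 0 ≤ f n u := by
            rw [hf]
            exact div_nonneg (mul_nonneg (pow_nonneg h0.le _) (pow_nonneg hu.1.le _))
              (mul_nonneg (by positivity) h1u.le)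
          rw [← enorm_eq_nnnorm, Real.enorm_eq_ofReal hfnn]
          apply ENNReal.ofReal_le_ofReal
          rw [hf, hC]
          apply div_le_div₀ (by positivity) ?_ ?_ ?_
          · exact mul_le_mul_of_nonneg_left
              (pow_le_pow_left₀ hu.1.le hu.2 _) (by positivity)
          · have : (0:ℝ) < 1 - z := by linarith
            positivity
          · have := hu.2
            nlinarith [Nat.cast_nonneg (α := ℝ) n]
      _ = ENNReal.ofReal (C n) * ENNReal.ofReal z := by
          rw [setLIntegral_const, Real.volume_Ioc, sub_zero]
  rw [intervalIntegral.integral_of_le h0.le]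
  have hne : ∑' n : ℕ, ∫⁻ u in Set.Ioc (0:ℝ) z, ‖f n u‖₊ ∂volume ≠ ⊤ := by
    apply ne_top_of_le_ne_top ?_ (ENNReal.tsum_le_tsum hbound)
    rw [ENNReal.tsum_mul_right, ← ENNReal.ofReal_tsum_of_nonneg hCnn hCsum]
    exact ENNReal.mul_ne_top ENNReal.ofReal_ne_top ENNReal.ofReal_ne_top
  have hswap := MeasureTheory.integral_tsum hmeas hne
  have hcongr : ∫ u in Set.Ioc (0:ℝ) z, Real.log (1 - u*z) / (u-1)
      = ∫ u in Set.Ioc (0:ℝ) z, ∑' n : ℕ, f n u := by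
    apply setIntegral_congr_fun measurableSet_Ioc
    intro u hu
    exact ((hpt u hu).tsum_eq).symm
  rw [hcongr, hswap]
  apply tsum_congr
  intro n
  rw [← intervalIntegral.integral_of_le h0.le]
  exact integral_term h0 h1 n

/-- `log²(1-z) = 2∫₀^z log(1-uz)/(u-1) du + Li₂(z²)` for `0 < z < 1`. -/
theorem stmt16 (z : ℝ) (h0 : 0 < z) (h1 : z < 1) :
    (Real.log (1 - z))^2
      = 2 * (∫ u in (0:ℝ)..z, Real.log (1 - u*z) / (u - 1))
        + ∑' k : ℕ, z^(2*(k+1))/((k : ℝ)+1)^2 := by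
  set L := -Real.log (1 - z) with hLdef
  set S : ℕ → ℝ := fun n => ∑ j ∈ range (n+1), aa z j with hS
  have hL : HasSum (aa z) L := hasSum_aa (habs h0 h1)
  have hsaa := summable_aa h0 h1
  have hb := hasSum_b h0 h1
  have hsb := hb.summable
  have haa_le_one : ∀ n, aa z n ≤ 1 := by
    intro n
    rw [aa]
    apply div_le_one_of_le₀ ?_ (by positivity)
    calc z^(n+1) ≤ 1 := pow_le_one₀ h0.le h1.le
      _ ≤ (n:ℝ)+1 := by have := Nat.cast_nonneg (α := ℝ) n; linarith
  have hsaasq : Summable (fun n => aa z n ^ 2) := by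
    apply Summable.of_nonneg_of_le (fun n => sq_nonneg _) (fun n => ?_) hsaa
    calc aa z n ^ 2 = aa z n * aa z n := sq (aa z n) ▸ rfl
      _ ≤ aa z n * 1 := mul_le_mul_of_nonneg_left (haa_le_one n) (aa_nonneg h0.le n)
      _ = aa z n := mul_one _
  have hsI : Summable (fun n => aa z n * (L - S n)) := by
    have h := (hsaa.mul_right L).sub ((hsb.add hsaasq).div_const 2)
    refine h.congr fun n => ?_
    simp only [hS]
    ring
  have hcomb := (hL.mul_right (2*L)).sub hb
  have hfinal : HasSum (fun n => 2*(aa z n*(L - S n)) + aa z n^2)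
      ((Real.log (1 - z))^2) := by
    rw [show (Real.log (1 - z))^2 = L * (2 * L) - (Real.log (1 - z))^2 by rw [hLdef]; ring]
    refine hcomb.congr_fun fun n => ?_
    simp only [hS]
    ring
  have hsplit := (hsI.hasSum.mul_left 2).add hsaasq.hasSum
  have hkey := hfinal.unique hsplit
  rw [hkey]
  congr 1
  · rw [integral_swap h0 h1]
  · apply tsum_congr
    intro k
    rw [aa, div_pow, ← pow_mul, mul_comm 2 (k+1)]
end
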